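/- arXiv:1112.2454 — 3 statements merged into one kernel-verified Lean document; each statement's English description precedes it below -/
import Mathlib

section
/- Let (V, φ) be a nondegenerate quadratic space over a field F of characteristic 0, with a hyperbolic pair e, f (i.e., φ[e] = φ[f] = 0, 2φ(e, f) = 1) and Z the orthogonal complement of Fe + Ff. If q ∈ F^× is not represented by φ on Z, then for h = qe + f the orthogonal complement W = (Fh)^⊥ decomposes as W = (Z ⊕ F(f - qe)), and φ is anisotropic on Z ⊕ F(f - qe) provided φ is anisotropic on Z. -/
/-- Let `(V, φ)` be a nondegenerate quadratic space over a field `F` of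
characteristic 0, with a hyperbolic pair `e, f` (`φ[e] = φ[f] = 0`,
`2φ(e,f) = 1`) and `Z` the orthogonal complement of `Fe + Ff`. If
`q ∈ F^×` is not represented by `φ` on `Z`, then for `h = q•e + f` the
orthogonal complement `W = (Fh)^⊥` equals `Z ⊕ F(f - q•e)`, and `φ` is
anisotropic on `Z ⊕ F(f - q•e)` provided `φ` is anisotropic on `Z`. -/
theorem orth_complement_of_hyperbolic_vector
    {F V : Type*} [Field F] [CharZero F] [AddCommGroup V] [Module F V]
    [FiniteDimensional F V]
    (φ : LinearMap.BilinForm F V) (hsym : ∀ x y, φ x y = φ y x)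
    (hnd : ∀ x : V, (∀ y : V, φ x y = 0) → x = 0)
    (e f : V) (he : φ e e = 0) (hf : φ f f = 0) (hef : 2 * φ e f = 1)
    (Z : Submodule F V)
    (hZ : Z = φ.orthogonal (Submodule.span F {e, f}))
    (q : F) (hq0 : q ≠ 0)
    (hqZ : ∀ z ∈ Z, φ z z ≠ q)
    (hZan : ∀ z ∈ Z, z ≠ 0 → φ z z ≠ 0) :
    LinearMap.ker (φ.flip (q • e + f)) = Z ⊔ Submodule.span F {f - q • e} ∧
    (∀ x ∈ Z ⊔ Submodule.span F {f - q • e}, x ≠ 0 → φ x x ≠ 0) := by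
  have hze : ∀ z ∈ Z, φ e z = 0 := by
    intro z hz
    rw [hZ, LinearMap.BilinForm.mem_orthogonal_iff] at hz
    exact hz e (Submodule.subset_span (by simp))
  have hzf : ∀ z ∈ Z, φ f z = 0 := by
    intro z hz
    rw [hZ, LinearMap.BilinForm.mem_orthogonal_iff] at hz
    exact hz f (Submodule.subset_span (by simp))
  have hform : ∀ x ∈ Z ⊔ Submodule.span F {f - q • e},
      ∃ z ∈ Z, ∃ c : F, x = z + c • (f - q • e) := by
    intro x hx
    rcases Submodule.mem_sup.mp hx with ⟨z, hz, w, hw, rfl⟩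
    rcases Submodule.mem_span_singleton.mp hw with ⟨c, rfl⟩
    exact ⟨z, hz, c, rfl⟩
  have key : ∀ z ∈ Z, ∀ c : F,
      φ (z + c • (f - q • e)) (z + c • (f - q • e)) = φ z z - q * c ^ 2 := by
    intro z hz c
    have h1 := hze z hz
    have h2 := hzf z hz
    have h3 : φ z e = 0 := by rw [hsym]; exact h1
    have h4 : φ z f = 0 := by rw [hsym]; exact h2
    have h5 : φ f e = φ e f := hsym f e
    simp only [map_add, map_sub, map_smul, LinearMap.add_apply, LinearMap.sub_apply,
      LinearMap.smul_apply, smul_eq_mul]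
    linear_combination c*h4 - q*c*h3 + c*h2 - q*c*h1 + c^2*hf + c^2*q^2*he
      - c^2*q*h5 - c^2*q*hef
  constructor
  · ext x
    simp only [LinearMap.mem_ker, LinearMap.flip_apply]
    constructor
    · intro hx
      have hx' : q * φ x e + φ x f = 0 := by
        simpa only [map_add, map_smul, smul_eq_mul, LinearMap.add_apply, LinearMap.smul_apply,
          LinearMap.flip_apply, LinearMap.BilinForm.flip_apply] using hx
      have h5 : φ f e = φ e f := hsym f e
      have hke : φ e (x - (-(q * (2 * φ x e))) • e - (2 * φ x e) • f) = 0 := by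
        simp only [map_sub, map_smul, smul_eq_mul]
        linear_combination hsym e x + (2*q*φ x e)*he - (φ x e)*hef
      have hkf : φ f (x - (-(q * (2 * φ x e))) • e - (2 * φ x e) • f) = 0 := by
        simp only [map_sub, map_smul, smul_eq_mul]
        linear_combination hsym f x + hx' + (2*q*φ x e)*h5 + (q*φ x e)*hef
          - (2*φ x e)*hf
      have hzmem : x - (-(q * (2 * φ x e))) • e - (2 * φ x e) • f ∈ Z := by
        rw [hZ, LinearMap.BilinForm.mem_orthogonal_iff]
        intro n hn
        induction hn using Submodule.span_induction with
        | mem m hm =>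
          simp only [Set.mem_insert_iff, Set.mem_singleton_iff] at hm
          rcases hm with h | h
          · subst h; exact hke
          · subst h; exact hkf
        | zero => simp [LinearMap.BilinForm.IsOrtho]
        | add a b _ _ ha hb =>
          simp only [LinearMap.BilinForm.IsOrtho, map_add, LinearMap.add_apply] at ha hb ⊢
          rw [ha, hb, add_zero]
        | smul t a _ ha =>
          simp only [LinearMap.BilinForm.IsOrtho, map_smul, LinearMap.smul_apply,
            smul_eq_mul] at ha ⊢
          rw [ha, mul_zero]
      have hxeq : x = (x - (-(q * (2 * φ x e))) • e - (2 * φ x e) • f)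
          + (2 * φ x e) • (f - q • e) := by module
      rw [hxeq]
      exact Submodule.add_mem_sup hzmem
        (Submodule.smul_mem _ _ (Submodule.mem_span_singleton_self _))
    · intro hx
      rcases hform x hx with ⟨z, hz, c, rfl⟩
      have h3 : φ z e = 0 := by rw [hsym]; exact hze z hz
      have h4 : φ z f = 0 := by rw [hsym]; exact hzf z hz
      have h5 : φ f e = φ e f := hsym f e
      show φ (z + c • (f - q • e)) (q • e + f) = 0
      simp only [map_add, map_sub, map_smul, LinearMap.add_apply, LinearMap.sub_apply,
        LinearMap.smul_apply, smul_eq_mul]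
      linear_combination q*h3 + h4 + c*q*h5 - c*q^2*he + c*hf
  · intro x hx hx0 hxx
    rcases hform x hx with ⟨z, hz, c, rfl⟩
    rw [key z hz c] at hxx
    by_cases hc : c = 0
    · subst hc
      simp only [zero_smul, add_zero] at hx0
      exact hZan z hz hx0 (by linear_combination hxx)
    · have hzz : φ z z = q * c ^ 2 := by linear_combination hxx
      have hmem : c⁻¹ • z ∈ Z := Submodule.smul_mem _ _ hz
      have : φ (c⁻¹ • z) (c⁻¹ • z) = q := by
        simp only [map_smul, LinearMap.smul_apply, smul_eq_mul, hzz]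
        field_simp
      exact hqZ _ hmem this
end

section
/- Let F be a nonarchimedean local field, L = 𝔬e + 𝔬f the maximal lattice in the hyperbolic plane V = Fe + Ff (with φ[e] = φ[f] = 0, 2φ(e,f) = 1), and h = qπ^{-m}e + π^m f where q ∈ 𝔬 has valuation ν ≥ 0 and 0 ≤ m ≤ ⌊ν/2⌋. Then the orthogonal complement W = (Fh)^⊥ equals Fg with g = π^m f - qπ^{-m}e, L ∩ W = 𝔬π^{-m}g, M = 𝔬π^{-⌊ν/2⌋}g is an 𝔬-maximal lattice in W, and [M / (L ∩ W)] = 𝔭^{⌊ν/2⌋ - m}. -/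
section Defs

variable (𝔬 : Type*) [CommRing 𝔬] (F : Type*) [Field F] [Algebra 𝔬 F]
variable (V : Type*) [AddCommGroup V] [Module F V] [Module 𝔬 V] [IsScalarTower 𝔬 F V]

/-- `L` is an `𝔬`-lattice in the `F`-vector space `V`: a finitely generated
`𝔬`-submodule containing an `F`-basis of `V`. -/
def IsLattice (L : Submodule 𝔬 V) : Prop :=
  L.FG ∧ Submodule.span F (L : Set V) = ⊤

/-- The `𝔬`-ideal `[M/L]` of `F`, generated by `det α` over all `F`-linear
automorphisms `α` of `V` with `Mα ⊆ L`. -/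
def latticeIndex (M L : Submodule 𝔬 V) : Submodule 𝔬 F :=
  Submodule.span 𝔬 {c : F | ∃ α : V ≃ₗ[F] V,
    c = LinearMap.det (α : V →ₗ[F] V) ∧ ∀ x ∈ M, α x ∈ L}

/-- The dual lattice `L̃ = {x ∈ V ∣ 2φ(x, L) ⊆ 𝔬}`. -/
def dualLattice (φ : LinearMap.BilinForm F V) (L : Submodule 𝔬 V) : Submodule 𝔬 V where
  carrier := {x : V | ∀ y ∈ L, 2 * φ x y ∈ (algebraMap 𝔬 F).range}
  zero_mem' := by
    intro y hy
    exact ⟨0, by simp⟩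
  add_mem' := by
    intro a b ha hb y hy
    obtain ⟨u, hu⟩ := ha y hy
    obtain ⟨v, hv⟩ := hb y hy
    refine ⟨u + v, ?_⟩
    rw [map_add, hu, hv, map_add, LinearMap.add_apply]
    ring
  smul_mem' := by
    intro c x hx y hy
    obtain ⟨u, hu⟩ := hx y hy
    refine ⟨c * u, ?_⟩
    have h1 : (c • x : V) = (algebraMap 𝔬 F c) • x := (algebraMap_smul F c x).symm
    rw [map_mul, hu, h1, map_smul, LinearMap.smul_apply, smul_eq_mul]
    ring

/-- An `𝔬`-maximal lattice with respect to `φ`: maximal among the lattices `N`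
with `φ[N] ⊆ 𝔬`. -/
def IsMaximalLattice (φ : LinearMap.BilinForm F V) (L : Submodule 𝔬 V) : Prop :=
  IsLattice 𝔬 F V L ∧ (∀ x ∈ L, φ x x ∈ (algebraMap 𝔬 F).range) ∧
    ∀ L' : Submodule 𝔬 V, IsLattice 𝔬 F V L' →
      (∀ x ∈ L', φ x x ∈ (algebraMap 𝔬 F).range) → L ≤ L' → L' = L

end Defs

lemma det_eq_repr_aux {F X : Type*} [Field F] [AddCommGroup X] [Module F X]
    (B : Module.Basis Unit F X) (α : X →ₗ[F] X) :
    LinearMap.det α = B.repr (α (B ())) () := by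
  rw [← LinearMap.det_toMatrix B α, Matrix.det_unique]
  rw [LinearMap.toMatrix_apply]

lemma dvr_sq_dvd_aux {𝔬 : Type*} [CommRing 𝔬] [IsDomain 𝔬] [IsDiscreteValuationRing 𝔬]
    {π : 𝔬} (hπ : Irreducible π) {r s : 𝔬} (hs : s ≠ 0) {t : ℕ} (ht : t ≤ 1)
    (hdvd : s ^ 2 ∣ r ^ 2 * π ^ t) : s ∣ r := by
  rcases eq_or_ne r 0 with rfl | hr
  · exact dvd_zero s
  obtain ⟨α, u1, hr1⟩ := IsDiscreteValuationRing.eq_unit_mul_pow_irreducible hr hπ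
  obtain ⟨β, u2, hs1⟩ := IsDiscreteValuationRing.eq_unit_mul_pow_irreducible hs hπ
  have h1 : Associated (π ^ α) r := ⟨u1, by rw [hr1]; ring⟩
  have h2 : Associated (π ^ β) s := ⟨u2, by rw [hs1]; ring⟩
  have h3 : π ^ (2 * β) ∣ π ^ (2 * α + t) := by
    have a1 : Associated (π ^ (2 * β)) (s ^ 2) := by
      rw [two_mul, pow_add, sq]; exact h2.mul_mul h2
    have a2 : Associated (r ^ 2 * π ^ t) (π ^ (2 * α + t)) := by
      rw [pow_add, two_mul, pow_add, sq]
      exact Associated.mul_mul (h1.symm.mul_mul h1.symm) (Associated.refl _)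
    exact (a1.dvd_iff_dvd_left.mpr (hdvd.trans a2.dvd))
  have hb : β ≤ α := by
    have := (pow_dvd_pow_iff hπ.ne_zero hπ.not_isUnit).mp h3
    omega
  exact h2.symm.dvd.trans ((pow_dvd_pow π hb).trans h1.dvd)


/-- The hyperbolic-plane computation: with `L = 𝔬e + 𝔬f`,
`h = qπ^{-m}e + π^m f` (`q` of valuation `ν`, `0 ≤ m ≤ ⌊ν/2⌋`), one has
`W = (Fh)^⊥ = Fg` for `g = π^m f - qπ^{-m} e`, `L ∩ W = 𝔬π^{-m}g`,
`M = 𝔬π^{-⌊ν/2⌋}g` is an `𝔬`-maximal lattice in `W`, and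
`[M/(L ∩ W)] = 𝔭^{⌊ν/2⌋ - m}`. -/
theorem hyperbolic_plane_latticeIndex
    {𝔬 : Type*} [CommRing 𝔬] [IsDomain 𝔬] [IsDiscreteValuationRing 𝔬]
    {F : Type*} [Field F] [Algebra 𝔬 F] [IsFractionRing 𝔬 F]
    {V : Type*} [AddCommGroup V] [Module F V] [Module 𝔬 V] [IsScalarTower 𝔬 F V]
    (π : 𝔬) (hπ : Irreducible π)
    (b : Module.Basis (Fin 2) F V) (e f : V) (he : e = b 0) (hf : f = b 1)
    (φ : LinearMap.BilinForm F V) (hsym : ∀ x y, φ x y = φ y x)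
    (hee : φ e e = 0) (hff : φ f f = 0) (hef : 2 * φ e f = 1)
    (L : Submodule 𝔬 V) (hL : L = Submodule.span 𝔬 {e, f})
    (q : 𝔬) (ν : ℕ) (hq : ∃ u : 𝔬ˣ, q = π ^ ν * ↑u)
    (m : ℕ) (hm : m ≤ ν / 2)
    (h g : V)
    (hh : h = (algebraMap 𝔬 F q * (algebraMap 𝔬 F π)⁻¹ ^ m) • e +
      ((algebraMap 𝔬 F π) ^ m) • f)
    (hg : g = ((algebraMap 𝔬 F π) ^ m) • f -
      (algebraMap 𝔬 F q * (algebraMap 𝔬 F π)⁻¹ ^ m) • e)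
    (W : Submodule F V) (hW : W = LinearMap.ker (φ.flip h))
    (M : Submodule 𝔬 V)
    (hM : M = Submodule.span 𝔬 {((algebraMap 𝔬 F π)⁻¹ ^ (ν / 2)) • g}) :
    W = Submodule.span F {g} ∧
    L ⊓ W.restrictScalars 𝔬 = Submodule.span 𝔬 {((algebraMap 𝔬 F π)⁻¹ ^ m) • g} ∧
    IsMaximalLattice 𝔬 F ↥W (φ.restrict W)
      (M.comap ((W.subtype).restrictScalars 𝔬)) ∧
    latticeIndex 𝔬 F ↥W
      (M.comap ((W.subtype).restrictScalars 𝔬))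
      ((L ⊓ W.restrictScalars 𝔬).comap ((W.subtype).restrictScalars 𝔬)) =
      Submodule.span 𝔬 {algebraMap 𝔬 F (π ^ (ν / 2 - m))} := by
  obtain ⟨u, hqu⟩ := hq
  have hinj : Function.Injective (algebraMap 𝔬 F) := IsFractionRing.injective 𝔬 F
  have hπ0 : algebraMap 𝔬 F π ≠ 0 := by
    simpa using (map_ne_zero_of_mem_nonZeroDivisors _ hinj
      (mem_nonZeroDivisors_of_ne_zero hπ.ne_zero))
  have h2 : (2 : F) ≠ 0 := by
    intro h0; rw [h0, zero_mul] at hef; exact zero_ne_one hef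
  have hef' : φ e f = 2⁻¹ := eq_inv_of_mul_eq_one_right hef
  have hfe : φ f e = 2⁻¹ := by rw [hsym f e]; exact hef'
  -- abbreviations
  set a : F := algebraMap 𝔬 F q * (algebraMap 𝔬 F π)⁻¹ ^ m with ha
  set p : F := (algebraMap 𝔬 F π) ^ m with hp
  have hp0 : p ≠ 0 := pow_ne_zero _ hπ0
  -- coordinates
  have hxrepr : ∀ x : V, x = b.repr x 0 • b 0 + b.repr x 1 • b 1 := by
    intro x
    have := b.sum_repr x
    rw [Fin.sum_univ_two] at this
    exact this.symm
  have hc1 : ∀ s t : F, b.repr (s • e + t • f) 1 = t := by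
    intro s t; simp [he, hf]
  have hc0 : ∀ s t : F, b.repr (s • e + t • f) 0 = s := by
    intro s t; simp [he, hf]
  -- φ values on h
  have φeh : φ e h = p * 2⁻¹ := by
    rw [hh]; simp [hee, hef', ← ha, ← hp]
  have φfh : φ f h = a * 2⁻¹ := by
    rw [hh]; simp [hff, hfe, ← ha, ← hp]
  have φgh : φ g h = 0 := by
    rw [hg]; simp [← ha, ← hp, φeh, φfh]; ring
  -- Part 1
  have hW1 : W = Submodule.span F {g} := by
    rw [hW]
    ext x
    simp only [LinearMap.mem_ker, LinearMap.flip_apply, Submodule.mem_span_singleton]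
    constructor
    · intro hx
      set s := b.repr x 0 with hs
      set t := b.repr x 1 with ht
      have hxe : x = s • e + t • f := by rw [he, hf]; exact hxrepr x
      have hval : s * (p * 2⁻¹) + t * (a * 2⁻¹) = 0 := by
        rw [hxe] at hx
        simpa [φeh, φfh] using hx
      have hsp : s * p + t * a = 0 := by
        have h4 : (2:F)⁻¹ * 2 = 1 := inv_mul_cancel₀ h2
        linear_combination (2 : F) * hval - (s * p + t * a) * h4
      refine ⟨t * p⁻¹, ?_⟩
      have e1 : (t * p⁻¹) * p = t := by field_simp
      have hs' : s = -(t * a * p⁻¹) := by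
        field_simp
        linear_combination hsp
      have e2 : (t * p⁻¹) * a = -s := by rw [hs']; ring
      rw [hg, smul_sub, smul_smul, smul_smul, e1, e2, hxe]
      rw [neg_smul]
      abel
    · rintro ⟨c, rfl⟩
      simp [φgh]

  have h2m : 2 * m ≤ ν := by omega
  have hpow : ∀ i j : ℕ, j ≤ i → ((algebraMap 𝔬 F π)⁻¹) ^ j * (algebraMap 𝔬 F π) ^ i
      = (algebraMap 𝔬 F π) ^ (i - j) := by
    intro i j hij
    rw [inv_pow, inv_mul_eq_iff_eq_mul₀ (pow_ne_zero _ hπ0), ← pow_add]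
    congr 1
    omega
  have c2 : ((algebraMap 𝔬 F π)⁻¹) ^ m * a = algebraMap 𝔬 F (π ^ (ν - 2*m) * ↑u) := by
    rw [ha, hqu, map_mul, map_mul, map_pow, map_pow]
    calc ((algebraMap 𝔬 F π)⁻¹) ^ m * ((algebraMap 𝔬 F π) ^ ν * (algebraMap 𝔬 F ↑u)
          * ((algebraMap 𝔬 F π)⁻¹) ^ m)
        = (((algebraMap 𝔬 F π)⁻¹) ^ (2*m) * (algebraMap 𝔬 F π) ^ ν) * algebraMap 𝔬 F ↑u := by
          rw [two_mul, pow_add]; ring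
      _ = (algebraMap 𝔬 F π) ^ (ν - 2*m) * algebraMap 𝔬 F ↑u := by rw [hpow ν (2*m) h2m]
  have c1 : ((algebraMap 𝔬 F π)⁻¹) ^ m * p = 1 := by
    rw [hp, inv_pow]
    exact inv_mul_cancel₀ hp0
  have key2 : ((algebraMap 𝔬 F π)⁻¹ ^ m) • g = f - ((π ^ (ν - 2*m) * ↑u : 𝔬)) • e := by
    rw [hg, smul_sub, smul_smul, smul_smul, c1, c2, one_smul, algebraMap_smul]
  -- Part 2
  have hLW : L ⊓ W.restrictScalars 𝔬
      = Submodule.span 𝔬 {((algebraMap 𝔬 F π)⁻¹ ^ m) • g} := by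
    apply le_antisymm
    · intro x hx
      obtain ⟨hxL, hxW⟩ := Submodule.mem_inf.mp hx
      rw [Submodule.restrictScalars_mem, hW1, Submodule.mem_span_singleton] at hxW
      obtain ⟨c, hxc⟩ := hxW
      rw [hL, Submodule.mem_span_pair] at hxL
      obtain ⟨s, t, hst⟩ := hxL
      have hxF : x = (algebraMap 𝔬 F s) • e + (algebraMap 𝔬 F t) • f := by
        rw [← hst, algebraMap_smul, algebraMap_smul]
      have hcg : x = (-(c * a)) • e + (c * p) • f := by
        rw [← hxc, hg, smul_sub, smul_smul, smul_smul, neg_smul]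
        abel
      have hco : algebraMap 𝔬 F t = c * p := by
        have e1 : b.repr x 1 = algebraMap 𝔬 F t := by rw [hxF]; exact hc1 _ _
        have e2 : b.repr x 1 = c * p := by rw [hcg]; exact hc1 _ _
        rw [← e1, e2]
      rw [Submodule.mem_span_singleton]
      refine ⟨t, ?_⟩
      rw [← algebraMap_smul F t, smul_smul, ← hxc]
      congr 1
      rw [hco, inv_pow, hp]
      field_simp
    · rw [Submodule.span_le, Set.singleton_subset_iff]
      refine Submodule.mem_inf.mpr ⟨?_, ?_⟩
      · rw [key2, hL]
        exact sub_mem (Submodule.subset_span (by simp))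
          (Submodule.smul_mem _ _ (Submodule.subset_span (by simp)))
      · rw [Submodule.restrictScalars_mem, hW1]
        exact Submodule.smul_mem _ _ (Submodule.subset_span rfl)
  -- setup for parts 3 and 4
  have h2k : 2 * (ν / 2) ≤ ν := by omega
  have hπk : ∀ j : ℕ, (algebraMap 𝔬 F π) ^ j * ((algebraMap 𝔬 F π)⁻¹) ^ j = 1 := by
    intro j
    rw [inv_pow]
    exact mul_inv_cancel₀ (pow_ne_zero _ hπ0)
  have hrg1 : b.repr g 1 = p := by
    have hgc : g = (-a) • e + p • f := by rw [hg, neg_smul]; abel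
    rw [hgc]; exact hc1 _ _
  have hg0 : g ≠ 0 := by
    intro h0
    rw [h0, map_zero] at hrg1
    exact hp0 (by simpa using hrg1.symm)
  set w : V := ((algebraMap 𝔬 F π)⁻¹ ^ (ν / 2)) • g with hw
  have hiπ0 : ((algebraMap 𝔬 F π)⁻¹ : F) ≠ 0 := inv_ne_zero hπ0
  have hw0 : w ≠ 0 := smul_ne_zero (pow_ne_zero _ hiπ0) hg0
  have hwW : w ∈ W := by
    rw [hW1]
    exact Submodule.smul_mem _ _ (Submodule.subset_span rfl)
  set v : ↥W := ⟨w, hwW⟩ with hv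
  have hv0 : v ≠ 0 := by
    intro h0
    exact hw0 (by simpa [hv] using congrArg Subtype.val h0)
  have hgw : g = ((algebraMap 𝔬 F π) ^ (ν / 2)) • w := by
    rw [hw, smul_smul, hπk, one_smul]
  -- every element of W is an F-multiple of v
  have hsurj : ∀ x : ↥W, ∃ μ : F, x = μ • v := by
    intro x
    have hx : (x : V) ∈ Submodule.span F {g} := hW1 ▸ x.2
    obtain ⟨c, hc⟩ := Submodule.mem_span_singleton.mp hx
    refine ⟨c * (algebraMap 𝔬 F π) ^ (ν / 2), ?_⟩
    apply Subtype.ext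
    rw [← hc]
    show c • g = (c * (algebraMap 𝔬 F π) ^ (ν / 2)) • w
    rw [hgw, smul_smul]
  -- M' is the 𝔬-span of v
  set M' := M.comap ((W.subtype).restrictScalars 𝔬) with hM'def
  have hM' : M' = Submodule.span 𝔬 {v} := by
    ext x
    rw [hM'def, Submodule.mem_comap, Submodule.mem_span_singleton]
    show (x : V) ∈ M ↔ _
    rw [hM, Submodule.mem_span_singleton]
    constructor
    · rintro ⟨t, ht⟩
      exact ⟨t, Subtype.ext (by rw [← ht]; exact (Submodule.coe_smul_of_tower t v).symm ▸ rfl)⟩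
    · rintro ⟨t, ht⟩
      exact ⟨t, by rw [← ht]; rfl⟩
  -- basis of W given by v
  have hli : LinearIndependent F (fun _ : Unit => v) := linearIndependent_unique_iff.mpr hv0
  have hsp : ⊤ ≤ Submodule.span F (Set.range (fun _ : Unit => v)) := by
    intro x _
    obtain ⟨μ, rfl⟩ := hsurj x
    exact Submodule.smul_mem _ _ (Submodule.subset_span ⟨(), rfl⟩)
  set B : Module.Basis Unit F ↥W := Module.Basis.mk hli hsp with hB
  have hBv : B () = v := by rw [hB, Module.Basis.mk_apply]
  have hdet : ∀ (α : ↥W →ₗ[F] ↥W) (c : F), α v = c • v → LinearMap.det α = c := by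
    intro α c hc
    rw [det_eq_repr_aux B α, hBv, hc]
    have hv1 : B.repr v () = 1 := by rw [← hBv]; simp
    simp [hv1]
  -- values of φ
  have h4 : (2:F)⁻¹ * 2 = 1 := inv_mul_cancel₀ h2
  have hpa : p * a = algebraMap 𝔬 F q := by
    rw [hp, ha]
    field_simp
    rw [mul_comm _ (algebraMap 𝔬 F q), mul_assoc, ← mul_pow, mul_one_div_cancel hπ0, one_pow,
      mul_one]
  have φsc : ∀ (c d : F) (x y : V), φ (c • x) (d • y) = c * d * φ x y := by
    intro c d x y
    simp only [map_smul, LinearMap.smul_apply, smul_eq_mul]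
    ring
  have φgg : φ g g = -(algebraMap 𝔬 F q) := by
    have step : φ g g = -(p * a) * (2 * φ e f) := by
      rw [hg]
      simp only [map_sub, map_smul, LinearMap.sub_apply, LinearMap.smul_apply, smul_eq_mul,
        hee, hff, hsym f e]
      ring
    rw [step, hef, mul_one, hpa]
  have c2k : ((algebraMap 𝔬 F π)⁻¹) ^ (ν/2) * (((algebraMap 𝔬 F π)⁻¹) ^ (ν/2)
      * algebraMap 𝔬 F q) = algebraMap 𝔬 F (π ^ (ν - 2*(ν/2)) * ↑u) := by
    rw [hqu, map_mul, map_mul, map_pow, map_pow]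
    calc ((algebraMap 𝔬 F π)⁻¹) ^ (ν/2) * (((algebraMap 𝔬 F π)⁻¹) ^ (ν/2)
          * ((algebraMap 𝔬 F π) ^ ν * algebraMap 𝔬 F ↑u))
        = (((algebraMap 𝔬 F π)⁻¹) ^ (2*(ν/2)) * (algebraMap 𝔬 F π) ^ ν)
            * algebraMap 𝔬 F ↑u := by rw [two_mul, pow_add]; ring
      _ = (algebraMap 𝔬 F π) ^ (ν - 2*(ν/2)) * algebraMap 𝔬 F ↑u := by
          rw [hpow ν (2*(ν/2)) h2k]
  have φww : φ w w = algebraMap 𝔬 F (-(π ^ (ν - 2*(ν/2)) * ↑u)) := by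
    rw [hw, map_smul, map_smul, LinearMap.smul_apply, smul_eq_mul, smul_eq_mul, φgg,
      map_neg, ← c2k]
    ring
  -- the restricted form
  have hres : ∀ x : ↥W, (φ.restrict W) x x = φ (x : V) (x : V) := by
    intro x
    simp [LinearMap.BilinForm.restrict_apply]
  -- membership in M'
  have hmemM' : ∀ x : ↥W, x ∈ M' ↔ ∃ t : 𝔬, x = t • v := by
    intro x
    rw [hM', Submodule.mem_span_singleton]
    exact ⟨fun ⟨t, ht⟩ => ⟨t, ht.symm⟩, fun ⟨t, ht⟩ => ⟨t, ht.symm⟩⟩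
  -- Part 3 : maximal lattice
  have part3 : IsMaximalLattice 𝔬 F ↥W (φ.restrict W) M' := by
    refine ⟨⟨?_, ?_⟩, ?_, ?_⟩
    · rw [hM']
      exact Submodule.fg_span_singleton v
    · apply eq_top_iff.mpr
      intro x _
      obtain ⟨μ, rfl⟩ := hsurj x
      refine Submodule.smul_mem _ _ (Submodule.subset_span ?_)
      rw [hM']
      exact Submodule.subset_span rfl
    · intro x hx
      obtain ⟨t, rfl⟩ := (hmemM' x).mp hx
      refine ⟨t * t * (-(π ^ (ν - 2*(ν/2)) * ↑u)), ?_⟩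
      rw [hres]
      have : ((t • v : ↥W) : V) = (algebraMap 𝔬 F t) • w := by
        rw [← algebraMap_smul F t v]
        rfl
      rw [this, φsc, φww, map_mul, map_mul]
    · intro L' hL' hφL' hML'
      apply le_antisymm _ hML'
      intro x hx
      obtain ⟨μ, rfl⟩ := hsurj x
      obtain ⟨c, hc⟩ := hφL' _ hx
      rw [hres] at hc
      have hcv : ((μ • v : ↥W) : V) = μ • w := rfl
      rw [hcv, φsc, φww] at hc
      -- hc : algebraMap c = μ * (μ * algebraMap (-(π^r * u)))
      obtain ⟨r0, s0, hs0, hμ⟩ := IsFractionRing.div_surjective (A := 𝔬) μ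
      have hs0' : s0 ≠ 0 := nonZeroDivisors.ne_zero hs0
      have hs0F : algebraMap 𝔬 F s0 ≠ 0 := fun hh =>
        hs0' (hinj (by rw [hh, map_zero]))
      have hμs : μ * algebraMap 𝔬 F s0 = algebraMap 𝔬 F r0 := by
        rw [← hμ]
        field_simp
      have hu : algebraMap 𝔬 F ↑u * algebraMap 𝔬 F ↑(u⁻¹) = 1 := by
        rw [← map_mul, Units.mul_inv, map_one]
      have heq : algebraMap 𝔬 F (-(c * s0^2) * ↑(u⁻¹))
          = algebraMap 𝔬 F (r0^2 * π ^ (ν - 2*(ν/2))) := by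
        rw [map_mul, map_neg, map_mul, map_pow, map_mul, map_pow, hc, map_neg, map_mul, map_pow]
        linear_combination ((algebraMap 𝔬 F π) ^ (ν - 2*(ν/2)) * (algebraMap 𝔬 F s0)^2 * μ^2) * hu
          + ((algebraMap 𝔬 F π) ^ (ν - 2*(ν/2)) * (μ * algebraMap 𝔬 F s0 + algebraMap 𝔬 F r0)) * hμs
      have heq' : -(c * s0^2) * ↑(u⁻¹) = r0^2 * π ^ (ν - 2*(ν/2)) := hinj heq
      have hdvd : s0 ^ 2 ∣ r0 ^ 2 * π ^ (ν - 2*(ν/2)) := by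
        rw [← heq']
        exact ⟨-c * ↑(u⁻¹), by ring⟩
      have hr1 : ν - 2*(ν/2) ≤ 1 := by omega
      obtain ⟨d, hd⟩ := dvr_sq_dvd_aux hπ hs0' hr1 hdvd
      have hμd : μ = algebraMap 𝔬 F d := by
        rw [← hμ, hd, map_mul]
        field_simp
      rw [hmemM']
      exact ⟨d, by rw [hμd, algebraMap_smul]⟩
  -- Part 4 : the lattice index
  have hv'W : ((algebraMap 𝔬 F π)⁻¹ ^ m) • g ∈ W := by
    rw [hW1]
    exact Submodule.smul_mem _ _ (Submodule.subset_span rfl)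
  set v' : ↥W := ⟨((algebraMap 𝔬 F π)⁻¹ ^ m) • g, hv'W⟩ with hv'
  set L'' := (L ⊓ W.restrictScalars 𝔬).comap ((W.subtype).restrictScalars 𝔬) with hL''def
  have hL'' : L'' = Submodule.span 𝔬 {v'} := by
    ext x
    rw [hL''def, Submodule.mem_comap, Submodule.mem_span_singleton]
    show (x : V) ∈ L ⊓ W.restrictScalars 𝔬 ↔ _
    rw [hLW, Submodule.mem_span_singleton]
    constructor
    · rintro ⟨t, ht⟩
      exact ⟨t, Subtype.ext (by rw [← ht]; rfl)⟩
    · rintro ⟨t, ht⟩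
      exact ⟨t, by rw [← ht]; rfl⟩
  have hsc : (algebraMap 𝔬 F π) ^ (ν/2 - m) * ((algebraMap 𝔬 F π)⁻¹) ^ (ν/2)
      = ((algebraMap 𝔬 F π)⁻¹) ^ m := by
    rw [← hpow (ν/2) m hm, mul_assoc, hπk, mul_one]
  have hv'v : v' = ((algebraMap 𝔬 F π) ^ (ν/2 - m)) • v := by
    apply Subtype.ext
    show ((algebraMap 𝔬 F π)⁻¹ ^ m) • g = ((algebraMap 𝔬 F π) ^ (ν/2 - m)) • w
    rw [hw, smul_smul, hsc]
  have part4 : latticeIndex 𝔬 F ↥W M' L''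
      = Submodule.span 𝔬 {algebraMap 𝔬 F (π ^ (ν / 2 - m))} := by
    apply le_antisymm
    · rw [latticeIndex, Submodule.span_le]
      rintro c ⟨α, hdc, hmap⟩
      have hvM' : v ∈ M' := by
        rw [hM']
        exact Submodule.subset_span rfl
      have := hmap v hvM'
      rw [hL'', Submodule.mem_span_singleton] at this
      obtain ⟨t, ht⟩ := this
      have hαv : (α : ↥W →ₗ[F] ↥W) v = (algebraMap 𝔬 F t * (algebraMap 𝔬 F π) ^ (ν/2 - m)) • v := by
        show α v = _
        rw [← ht, hv'v, ← algebraMap_smul F t, smul_smul]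
      have hcval : c = algebraMap 𝔬 F t * (algebraMap 𝔬 F π) ^ (ν/2 - m) := by
        rw [hdc]
        exact hdet _ _ hαv
      rw [SetLike.mem_coe, Submodule.mem_span_singleton]
      refine ⟨t, ?_⟩
      rw [hcval, map_pow, Algebra.smul_def]
    · rw [Submodule.span_le, Set.singleton_subset_iff, SetLike.mem_coe, latticeIndex]
      apply Submodule.subset_span
      have hc0 : (algebraMap 𝔬 F π) ^ (ν/2 - m) ≠ 0 := pow_ne_zero _ hπ0
      refine ⟨LinearEquiv.smulOfNeZero F ↥W _ hc0, ?_, ?_⟩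
      · rw [map_pow]
        symm
        apply hdet
        rfl
      · intro x hx
        obtain ⟨t, rfl⟩ := (hmemM' x).mp hx
        rw [hL'', Submodule.mem_span_singleton]
        refine ⟨t, ?_⟩
        show t • v' = LinearEquiv.smulOfNeZero F ↥W _ hc0 (t • v)
        rw [hv'v]
        show t • _ • v = ((algebraMap 𝔬 F π) ^ (ν/2 - m)) • (t • v)
        rw [smul_comm]
  exact ⟨hW1, hLW, part3, part4⟩
end

section
/- Let F be a nonarchimedean local field, (V, φ) nondegenerate with Witt data: Z an anisotropic subspace, e, f a hyperbolic pair orthogonal to Z, so V = Z ⊕ (Fe + Ff). Fix z ∈ Z with φ[z] = q ≠ 0, m ≥ 0, and h = z + π^m e. Then W = (Fh)^⊥ = (Z ∩ (Fz)^⊥) ⊕ (Fe + Ff₀) is a Witt decomposition of W, where f₀ = f - (π^{2m}/(4q))e - (π^m/(2q))z; in particular φ[e] = φ[f₀] = 0 and 2φ(e, f₀) = 1. -/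
/-- Witt decomposition of the orthogonal complement of `h = z + π^m e`:
`W = (Fh)^⊥ = (Z ∩ (Fz)^⊥) ⊕ (Fe + Ff₀)` with
`f₀ = f - (π^{2m}/(4q))e - (π^m/(2q))z`; in particular `φ[f₀] = 0` and
`2φ(e, f₀) = 1`. -/
theorem witt_decomposition_of_orth_complement
    {𝔬 : Type*} [CommRing 𝔬] [IsDomain 𝔬] [IsDiscreteValuationRing 𝔬]
    {F : Type*} [Field F] [Algebra 𝔬 F] [IsFractionRing 𝔬 F]
    {V : Type*} [AddCommGroup V] [Module F V] [FiniteDimensional F V]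
    (π : 𝔬) (hπ : Irreducible π)
    (φ : LinearMap.BilinForm F V) (hsym : ∀ x y, φ x y = φ y x)
    (hnd : ∀ x : V, (∀ y : V, φ x y = 0) → x = 0)
    (Z : Submodule F V) (hZan : ∀ x ∈ Z, x ≠ 0 → φ x x ≠ 0)
    (e f : V)
    (hZe : ∀ x ∈ Z, φ x e = 0) (hZf : ∀ x ∈ Z, φ x f = 0)
    (hee : φ e e = 0) (hff : φ f f = 0) (hef : 2 * φ e f = 1)
    (hV : Z ⊔ Submodule.span F {e, f} = ⊤)
    (z : V) (hz : z ∈ Z) (q : F) (hq : φ z z = q) (hq0 : q ≠ 0)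
    (m : ℕ)
    (h f₀ : V)
    (hh : h = z + ((algebraMap 𝔬 F π) ^ m) • e)
    (hf₀ : f₀ = f - ((algebraMap 𝔬 F π) ^ (2 * m) / (4 * q)) • e -
      ((algebraMap 𝔬 F π) ^ m / (2 * q)) • z) :
    LinearMap.ker (φ.flip h) =
      (Z ⊓ LinearMap.ker (φ.flip z)) ⊔ Submodule.span F {e, f₀} ∧
    (Z ⊓ LinearMap.ker (φ.flip z)) ⊓ Submodule.span F {e, f₀} = ⊥ ∧
    φ f₀ f₀ = 0 ∧ 2 * φ e f₀ = 1 := by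
  have h2 : (2 : F) ≠ 0 := by
    intro h2; rw [h2, zero_mul] at hef; exact zero_ne_one hef
  have h4 : (4 : F) ≠ 0 := by
    have h42 : (4 : F) = 2 * 2 := by norm_num
    rw [h42]; exact mul_ne_zero h2 h2
  have hef' : φ e f = 1 / 2 := by
    field_simp
    linear_combination hef
  have hze : φ z e = 0 := hZe z hz
  have hzf : φ z f = 0 := hZf z hz
  have hez : φ e z = 0 := by rw [hsym]; exact hze
  have hfz : φ f z = 0 := by rw [hsym]; exact hzf
  have hfe : φ f e = 1 / 2 := by rw [hsym]; exact hef'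
  set p : F := (algebraMap 𝔬 F π) ^ m with hp
  have hp2 : (algebraMap 𝔬 F π) ^ (2 * m) = p ^ 2 := by
    rw [hp, mul_comm, pow_mul]
  rw [hp2] at hf₀
  have expand : ∀ (a b : F) (u v w : V),
      φ (u - a • v - b • w) = φ u - a • φ v - b • φ w := by
    intro a b u v w
    simp [map_sub, map_smul]
  have hef₀ : φ e f₀ = 1 / 2 := by
    rw [hf₀]
    simp [map_sub, map_smul, hef', hee, hez, smul_eq_mul]
  have hf₀e : φ f₀ e = 1 / 2 := by rw [hsym]; exact hef₀
  have hf₀z : φ f₀ z = -(p / 2) := by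
    rw [hf₀, expand]
    simp only [LinearMap.sub_apply, LinearMap.smul_apply, smul_eq_mul, hfz, hez, hq]
    field_simp
    ring
  have hf₀f : φ f₀ f = -(p ^ 2 / (4 * q) * (1 / 2)) := by
    rw [hf₀, expand]
    simp only [LinearMap.sub_apply, LinearMap.smul_apply, smul_eq_mul, hff, hef', hzf]
    ring
  have heh : φ e h = 0 := by
    rw [hh]
    simp [map_add, map_smul, hez, hee]
  have hf₀h : φ f₀ h = 0 := by
    rw [hh]
    simp only [map_add, map_smul, smul_eq_mul, hf₀z, hf₀e]
    ring
  have hf₀f₀ : φ f₀ f₀ = 0 := by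
    rw [hf₀]
    simp only [map_sub, map_smul, LinearMap.sub_apply, LinearMap.smul_apply,
      smul_eq_mul, hff, hfe, hfz, hef', hee, hez, hzf, hze, hq]
    field_simp
    ring
  refine ⟨?_, ?_, hf₀f₀, by rw [hef₀, one_div]; exact mul_inv_cancel₀ h2⟩
  · -- kernel equality
    apply le_antisymm
    · intro y hy
      simp only [LinearMap.mem_ker, LinearMap.BilinForm.flip_apply] at hy
      have hy' : y ∈ Z ⊔ Submodule.span F {e, f} := by
        rw [hV]; exact Submodule.mem_top
      obtain ⟨x, hx, w, hw, rfl⟩ := Submodule.mem_sup.mp hy'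
      obtain ⟨α, β, rfl⟩ := Submodule.mem_span_pair.mp hw
      have hxe : φ x e = 0 := hZe x hx
      rw [hh] at hy
      simp only [map_add, map_smul, LinearMap.add_apply, LinearMap.smul_apply,
        smul_eq_mul, hxe, hez, hee, hfz, hfe, hq, mul_zero, zero_mul, add_zero,
        zero_add, mul_one] at hy
      refine Submodule.mem_sup.mpr
        ⟨x + (β * (p / (2 * q))) • z, ⟨Submodule.add_mem _ hx (Submodule.smul_mem _ _ hz), ?_⟩,
          (α + β * (p ^ 2 / (4 * q))) • e + β • f₀,
          Submodule.mem_span_pair.mpr ⟨_, _, rfl⟩, ?_⟩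
      · refine LinearMap.mem_ker.mpr ?_
        show φ (x + (β * (p / (2 * q))) • z) z = 0
        simp only [map_add, map_smul, LinearMap.add_apply, LinearMap.smul_apply,
          smul_eq_mul, hq]
        linear_combination hy + (β * p / 2) * (div_self hq0)
      · rw [hf₀]
        module
    · apply sup_le
      · intro x hx
        obtain ⟨hxZ, hxk⟩ := Submodule.mem_inf.mp hx
        simp only [LinearMap.mem_ker, LinearMap.BilinForm.flip_apply] at hxk ⊢
        rw [hh]
        simp [map_add, map_smul, hZe x hxZ, hxk]
      · rw [Submodule.span_le]
        rintro v hv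
        simp only [Set.mem_insert_iff, Set.mem_singleton_iff] at hv
        rcases hv with rfl | rfl
        · exact LinearMap.mem_ker.mpr heh
        · exact LinearMap.mem_ker.mpr hf₀h
  · -- trivial intersection
    rw [eq_bot_iff]
    intro w hw
    obtain ⟨hw1, hw2⟩ := Submodule.mem_inf.mp hw
    obtain ⟨hwZ, -⟩ := Submodule.mem_inf.mp hw1
    obtain ⟨α, β, rfl⟩ := Submodule.mem_span_pair.mp hw2
    have he0 := hZe _ hwZ
    have hf0 := hZf _ hwZ
    simp only [map_add, map_smul, LinearMap.add_apply, LinearMap.smul_apply,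
      smul_eq_mul, hee, hf₀e] at he0
    have hβ : β = 0 := by
      field_simp at he0
      linear_combination he0
    subst hβ
    simp only [map_add, map_smul, LinearMap.add_apply, LinearMap.smul_apply,
      smul_eq_mul, hef', zero_smul, add_zero] at hf0
    have hα : α = 0 := by
      rcases mul_eq_zero.mp hf0 with hc | hc
      · exact hc
      · exact absurd hc (by rw [one_div]; exact inv_ne_zero h2)
    subst hα
    simp
end
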